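/- Assume conditions (I1)-(I5). The map m : X⁺ → M, assigning to each u⁺ ∈ X⁺ the unique point of M in the affine subspace u⁺ + X̃ (equivalently, the unique minimizer of I on u⁺ + X̃), is a homeomorphism from X⁺ with the norm topology onto M with the norm topology of X, with inverse M ∋ u ↦ u⁺. -/

import Mathlib

open Filter Topology Set

noncomputable section

variable {X : Type*} [NormedAddCommGroup X] [NormedSpace ℝ X] [CompleteSpace X]

/-- 𝒯-convergence of a sequence: norm convergence of the `X⁺`-components together with
weak convergence of the `X̃`-components (`P` is the projection onto `X⁺` along `X̃`). -/
def TConv (P : X →L[ℝ] X) (u : ℕ → X) (l : X) : Prop :=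
  Tendsto (fun n => P (u n)) atTop (𝓝 (P l)) ∧
    ∀ φ : StrongDual ℝ X, Tendsto (fun n => φ (u n - P (u n))) atTop (𝓝 (φ (l - P l)))

/-- The functional `J(u) = ½‖u⁺‖² − I(u)`. -/
def Jf (P : X →L[ℝ] X) (I : X → ℝ) : X → ℝ := fun u => (1 / 2 : ℝ) * ‖P u‖ ^ 2 - I u

/-- `M = {u ∈ X : I'(u)[v] = 0 for all v ∈ X̃}`. -/
def Mset (P : X →L[ℝ] X) (I : X → ℝ) : Set X := {u | ∀ v : X, P v = 0 → fderiv ℝ I u v = 0}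

/-- The Nehari–Pankov set `N = {u ∈ X \ X̃ : J'(u)|_{ℝu ⊕ X̃} = 0}`. -/
def Nset (P : X →L[ℝ] X) (I : X → ℝ) : Set X :=
  {u | P u ≠ 0 ∧ fderiv ℝ (Jf P I) u u = 0 ∧ ∀ v : X, P v = 0 → fderiv ℝ (Jf P I) u v = 0}

/-- Structural hypotheses: `X` is a reflexive Banach space, `P : X → X` is a continuous
linear idempotent (the projection onto `X⁺ = {u : P u = u}` along `X̃ = ker P`),
`‖u‖² = ‖u⁺‖² + ‖ũ‖²`, and the norm on `X⁺` is induced by a Hilbert inner product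
(parallelogram law). -/
structure SpaceHyp (P : X →L[ℝ] X) : Prop where
  idem : ∀ u : X, P (P u) = P u
  pyth : ∀ u : X, ‖u‖ ^ 2 = ‖P u‖ ^ 2 + ‖u - P u‖ ^ 2
  parallelogram : ∀ u v : X, P u = u → P v = v →
    ‖u + v‖ ^ 2 + ‖u - v‖ ^ 2 = 2 * ‖u‖ ^ 2 + 2 * ‖v‖ ^ 2
  reflexive : Function.Surjective (NormedSpace.inclusionInDoubleDual ℝ X)

/-- (I1) `I ∈ C¹(X, ℝ)` and `I(u) ≥ I(0) = 0`. -/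
def CondI1 (I : X → ℝ) : Prop := ContDiff ℝ 1 I ∧ I 0 = 0 ∧ ∀ u : X, 0 ≤ I u

/-- (I2) `I` is 𝒯-sequentially lower semicontinuous. -/
def CondI2 (P : X →L[ℝ] X) (I : X → ℝ) : Prop :=
  ∀ (u : ℕ → X) (l : X), TConv P u l → I l ≤ Filter.liminf (fun n => I (u n)) atTop

/-- (I3) If `u_n →_𝒯 u` and `I(u_n) → I(u)` then `u_n → u` in norm. -/
def CondI3 (P : X →L[ℝ] X) (I : X → ℝ) : Prop :=
  ∀ (u : ℕ → X) (l : X), TConv P u l → Tendsto (fun n => I (u n)) atTop (𝓝 (I l)) →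
    Tendsto u atTop (𝓝 l)

/-- (I4) `‖u⁺‖ + I(u) → ∞` as `‖u‖ → ∞`. -/
def CondI4 (P : X →L[ℝ] X) (I : X → ℝ) : Prop :=
  ∀ u : ℕ → X, Tendsto (fun n => ‖u n‖) atTop atTop →
    Tendsto (fun n => ‖P (u n)‖ + I (u n)) atTop atTop

/-- (I5) If `u ∈ M` then `I(u) < I(u + v)` for every `v ∈ X̃ \ {0}`. -/
def CondI5 (P : X →L[ℝ] X) (I : X → ℝ) : Prop :=
  ∀ u ∈ Mset P I, ∀ v : X, P v = 0 → v ≠ 0 → I u < I (u + v)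

/-- (I6) `a := inf {J(u) : u ∈ X⁺, ‖u‖ = r} > 0` for some `r > 0`. -/
def CondI6 (P : X →L[ℝ] X) (I : X → ℝ) (r a : ℝ) : Prop :=
  0 < r ∧ a = sInf (Jf P I '' {u : X | P u = u ∧ ‖u‖ = r}) ∧ 0 < a

/-- (I7) There exists `u⁺ ∈ X⁺` with `sup_{v ∈ X̃} J(u⁺ + v) < a`. -/
def CondI7 (P : X →L[ℝ] X) (I : X → ℝ) (a : ℝ) : Prop :=
  ∃ up : X, P up = up ∧ ∃ b : ℝ, b < a ∧ ∀ v : X, P v = 0 → Jf P I (up + v) ≤ b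

/-- (I8) `I(t_n u_n)/t_n² → ∞` whenever `t_n → ∞` and `u_n⁺ → u⁺ ≠ 0`. -/
def CondI8 (P : X →L[ℝ] X) (I : X → ℝ) : Prop :=
  ∀ (t : ℕ → ℝ) (u : ℕ → X) (w : X), Tendsto t atTop atTop →
    Tendsto (fun n => P (u n)) atTop (𝓝 w) → w ≠ 0 →
      Tendsto (fun n => I (t n • u n) / t n ^ 2) atTop atTop

/-- (I9) The Nehari–Pankov inequality for `I`. -/
def CondI9 (P : X →L[ℝ] X) (I : X → ℝ) : Prop :=
  ∀ u ∈ Nset P I, ∀ t : ℝ, 0 ≤ t → ∀ v : X, P v = 0 → u ≠ t • u + v →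
    (t ^ 2 - 1) / 2 * fderiv ℝ I u u + t * fderiv ℝ I u v + I u - I (t • u + v) < 0

/-- A `(PS)_c`-sequence for `J`. -/
def PSSeq (P : X →L[ℝ] X) (I : X → ℝ) (c : ℝ) (u : ℕ → X) : Prop :=
  Tendsto (fun n => Jf P I (u n)) atTop (𝓝 c) ∧
    Tendsto (fun n => ‖fderiv ℝ (Jf P I) (u n)‖) atTop (𝓝 0)

/-- `J` satisfies the `(PS)ᵀ_c`-condition in `S`: every `(PS)_c`-sequence contained in `S`
has a 𝒯-convergent subsequence. -/
def PSTCond (P : X →L[ℝ] X) (I : X → ℝ) (S : Set X) (c : ℝ) : Prop :=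
  ∀ u : ℕ → X, (∀ n, u n ∈ S) → PSSeq P I c u →
    ∃ (φ : ℕ → ℕ) (l : X), StrictMono φ ∧ TConv P (u ∘ φ) l

/-- The class of mountain pass paths in `M`. -/
def GammaSet (P : X →L[ℝ] X) (I : X → ℝ) (r a : ℝ) : Set C(unitInterval, X) :=
  {γ | (∀ t, γ t ∈ Mset P I) ∧ γ 0 = 0 ∧ r < ‖P (γ 1)‖ ∧ Jf P I (γ 1) < a}

/-- The mountain pass level `c_M = inf_{γ ∈ Γ} max_{t ∈ [0,1]} J(γ(t))`. -/
def cMP (P : X →L[ℝ] X) (I : X → ℝ) (r a : ℝ) : ℝ :=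
  sInf ((fun γ : C(unitInterval, X) => sSup (range fun t => Jf P I (γ t))) '' GammaSet P I r a)

/-- The Nehari–Pankov level `c_N = inf_N J`. -/
def cNP (P : X →L[ℝ] X) (I : X → ℝ) : ℝ := sInf (Jf P I '' Nset P I)



/-! ### Auxiliary results: weak sequential compactness in reflexive spaces -/

section WeakCompactness

open NormedSpace TopologicalSpace

variable {E : Type*} [NormedAddCommGroup E] [NormedSpace ℝ E]

/-- Separation of a point from a closed subspace by a functional vanishing on it. -/
lemma exists_dual_vanishing (S : Submodule ℝ E) (hS : IsClosed (S : Set E)) {z : E}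
    (hz : z ∉ S) : ∃ f : StrongDual ℝ E, (∀ s ∈ S, f s = 0) ∧ f z ≠ 0 := by
  obtain ⟨f, c, hfz, hfs⟩ := geometric_hahn_banach_point_closed S.convex hS hz
  have hc0 : c < 0 := by simpa using hfs 0 S.zero_mem
  refine ⟨f, fun s hs => ?_, ne_of_lt (hfz.trans hc0)⟩
  by_contra h
  have h2 := hfs (((c - 1) / f s) • s) (S.smul_mem _ hs)
  rw [map_smul, smul_eq_mul, div_mul_cancel₀ _ h] at h2
  linarith

/-- The restriction map from the dual of `E` to the dual of a submodule. -/
def dualRestrict (S : Submodule ℝ E) : StrongDual ℝ E →L[ℝ] StrongDual ℝ S :=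
  (ContinuousLinearMap.compL ℝ S E ℝ).flip S.subtypeL

@[simp] lemma dualRestrict_apply (S : Submodule ℝ E) (f : StrongDual ℝ E) (s : S) :
    dualRestrict S f s = f s := rfl

/-- A closed subspace of a reflexive space is reflexive. -/
lemma surjective_doubleDual_subspace
    (hrefl : Function.Surjective (inclusionInDoubleDual ℝ E))
    (S : Submodule ℝ E) (hS : IsClosed (S : Set E)) :
    Function.Surjective (inclusionInDoubleDual ℝ S) := by
  intro Φ
  obtain ⟨x, hx⟩ := hrefl (Φ.comp (dualRestrict S))
  have hxval : ∀ f : StrongDual ℝ E, f x = Φ (dualRestrict S f) := by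
    intro f
    calc f x = inclusionInDoubleDual ℝ E x f := (NormedSpace.dual_def ℝ E x f).symm
      _ = (Φ.comp (dualRestrict S)) f := by rw [hx]
      _ = Φ (dualRestrict S f) := rfl
  have hxS : x ∈ S := by
    by_contra h
    obtain ⟨f, hf0, hfz⟩ := exists_dual_vanishing S hS h
    apply hfz
    rw [hxval f]
    have h0 : dualRestrict S f = 0 := ContinuousLinearMap.ext fun s => hf0 s s.2
    rw [h0, map_zero]
  refine ⟨⟨x, hxS⟩, ?_⟩
  apply ContinuousLinearMap.ext
  intro g
  obtain ⟨G, hG, -⟩ := exists_extension_norm_eq S g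
  have hres : dualRestrict S G = g := ContinuousLinearMap.ext fun s => hG s
  calc inclusionInDoubleDual ℝ S ⟨x, hxS⟩ g = g ⟨x, hxS⟩ := NormedSpace.dual_def ℝ _ _ _
    _ = G x := (hG ⟨x, hxS⟩).symm
    _ = Φ (dualRestrict S G) := hxval G
    _ = Φ g := by rw [hres]

/-- If the dual of a normed space is separable, so is the space. -/
lemma separableSpace_of_dual_separable
    (h : SeparableSpace (StrongDual ℝ E)) : SeparableSpace E := by
  haveI := h
  haveI : Nonempty (StrongDual ℝ E) := ⟨0⟩
  set f : ℕ → StrongDual ℝ E := denseSeq (StrongDual ℝ E) with hfdef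
  have hdense : DenseRange f := denseRange_denseSeq _
  have hexv : ∀ n, ∃ v : E, ‖v‖ ≤ 1 ∧ ‖f n‖ / 2 ≤ ‖f n v‖ := by
    intro n
    rcases eq_or_ne (f n) 0 with h0 | h0
    · exact ⟨0, by simp, by simp [h0]⟩
    · have hlt : ‖f n‖ / 2 < ‖f n‖ := half_lt_self (norm_pos_iff.mpr h0)
      obtain ⟨v, hv1, hv2⟩ := (f n).exists_lt_apply_of_lt_opNorm hlt
      exact ⟨v, hv1.le, hv2.le⟩
  choose x hx1 hx2 using hexv
  have hcl : closure ((Submodule.span ℝ (Set.range x) : Submodule ℝ E) : Set E) = Set.univ := by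
    by_contra hne
    obtain ⟨z, hz⟩ := Set.ne_univ_iff_exists_notMem _ |>.mp hne
    have hz' : z ∉ (Submodule.span ℝ (Set.range x)).topologicalClosure := by
      intro hmem
      exact hz (by rwa [← Submodule.topologicalClosure_coe])
    obtain ⟨g, hg0, hgz⟩ := exists_dual_vanishing _
      (Submodule.isClosed_topologicalClosure _) hz'
    have hgpos : 0 < ‖g‖ := norm_pos_iff.mpr (fun h0 => hgz (by simp [h0]))
    obtain ⟨n, hn⟩ := Metric.denseRange_iff.mp hdense g (‖g‖ / 4) (by positivity)
    have hgx : g (x n) = 0 := hg0 _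
      (Submodule.le_topologicalClosure _ (Submodule.subset_span ⟨n, rfl⟩))
    have hfg : ‖f n - g‖ < ‖g‖ / 4 := by
      rw [← norm_sub_rev, ← dist_eq_norm]; exact hn
    have h1 : ‖g‖ - ‖f n‖ ≤ ‖f n - g‖ := by
      have := norm_sub_norm_le g (f n)
      rw [norm_sub_rev] at this
      linarith [this]
    have h2 : ‖f n (x n)‖ ≤ ‖g‖ / 4 := by
      have heq : f n (x n) = (f n - g) (x n) := by simp [hgx]
      rw [heq]
      calc ‖(f n - g) (x n)‖ ≤ ‖f n - g‖ * ‖x n‖ := (f n - g).le_opNorm _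
        _ ≤ ‖f n - g‖ * 1 := mul_le_mul_of_nonneg_left (hx1 n) (norm_nonneg _)
        _ ≤ ‖g‖ / 4 := by linarith
    have h3 := hx2 n
    linarith
  rw [← isSeparable_univ_iff, ← hcl]
  exact ((Set.countable_range x).isSeparable.span).closure

/-- Diagonal extraction: in a reflexive space with separable dual, every bounded
sequence has a weakly convergent subsequence. -/
lemma weak_seq_compact_of_separable_dual {Z : Type*} [NormedAddCommGroup Z] [NormedSpace ℝ Z]
    (hsep : SeparableSpace (StrongDual ℝ Z))
    (hrefl : Function.Surjective (inclusionInDoubleDual ℝ Z))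
    (z : ℕ → Z) (C : ℝ) (hC : ∀ n, ‖z n‖ ≤ C) :
    ∃ φ : ℕ → ℕ, StrictMono φ ∧ ∃ w : Z,
      ∀ g : StrongDual ℝ Z, Tendsto (fun n => g (z (φ n))) atTop (𝓝 (g w)) := by
  haveI := hsep
  haveI : Nonempty (StrongDual ℝ Z) := ⟨0⟩
  have hC0 : (0:ℝ) ≤ C := le_trans (norm_nonneg (z 0)) (hC 0)
  set f : ℕ → StrongDual ℝ Z := denseSeq (StrongDual ℝ Z) with hfdef
  have hdense : DenseRange f := denseRange_denseSeq _
  set T : Set (ℕ → ℝ) := Set.pi Set.univ (fun k => Set.Icc (-(‖f k‖ * C)) (‖f k‖ * C)) with hT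
  have hTc : IsCompact T := isCompact_univ_pi fun k => isCompact_Icc
  have hmem : ∀ n, (fun k => f k (z n)) ∈ T := by
    intro n
    rw [Set.mem_univ_pi]
    intro k
    have h2 : ‖f k (z n)‖ ≤ ‖f k‖ * C :=
      ((f k).le_opNorm (z n)).trans (mul_le_mul_of_nonneg_left (hC n) (norm_nonneg _))
    rw [Real.norm_eq_abs, abs_le] at h2
    exact h2
  obtain ⟨a, -, φ, hφ, hconv⟩ := hTc.tendsto_subseq hmem
  have hk : ∀ k, Tendsto (fun n => f k (z (φ n))) atTop (𝓝 (a k)) := fun k =>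
    tendsto_pi_nhds.mp hconv k
  have hcauchy : ∀ g : StrongDual ℝ Z, CauchySeq (fun n => g (z (φ n))) := by
    intro g
    rw [Metric.cauchySeq_iff]
    intro ε hε
    have hC1 : (0:ℝ) < C + 1 := by linarith
    obtain ⟨k, hk'⟩ := Metric.denseRange_iff.mp hdense g (ε / (3 * (C + 1))) (by positivity)
    obtain ⟨N, hN⟩ := Metric.cauchySeq_iff.mp (hk k).cauchySeq (ε / 3) (by positivity)
    have hterm : ∀ n, dist (g (z (φ n))) (f k (z (φ n))) < ε / 3 := by
      intro n
      have hgk : ‖g - f k‖ < ε / (3 * (C + 1)) := by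
        rw [← dist_eq_norm]; exact hk'
      rw [dist_eq_norm]
      have heq : g (z (φ n)) - f k (z (φ n)) = (g - f k) (z (φ n)) := by simp
      rw [heq]
      calc ‖(g - f k) (z (φ n))‖ ≤ ‖g - f k‖ * ‖z (φ n)‖ := (g - f k).le_opNorm _
        _ ≤ ‖g - f k‖ * (C + 1) :=
            mul_le_mul_of_nonneg_left (le_trans (hC _) (by linarith)) (norm_nonneg _)
        _ < (ε / (3 * (C + 1))) * (C + 1) := by
            apply mul_lt_mul_of_pos_right hgk hC1
        _ = ε / 3 := by field_simp
    refine ⟨N, fun p hp q hq => ?_⟩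
    have h4 := dist_triangle4 (g (z (φ p))) (f k (z (φ p))) (f k (z (φ q))) (g (z (φ q)))
    have h5 := hN p hp q hq
    have h6 := hterm p
    have h7 := hterm q
    rw [dist_comm (f k (z (φ q))) (g (z (φ q)))] at h4
    linarith
  have hlim : ∀ g : StrongDual ℝ Z, ∃ r : ℝ,
      Tendsto (fun n => g (z (φ n))) atTop (𝓝 r) :=
    fun g => cauchySeq_tendsto_of_complete (hcauchy g)
  choose lim hlimspec using hlim
  have hadd : ∀ g1 g2 : StrongDual ℝ Z, lim (g1 + g2) = lim g1 + lim g2 := by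
    intro g1 g2
    refine tendsto_nhds_unique ?_ ((hlimspec g1).add (hlimspec g2))
    have heq : (fun n => (g1 + g2) (z (φ n))) =
        fun n => g1 (z (φ n)) + g2 (z (φ n)) := by funext n; simp
    rw [← heq]
    exact hlimspec (g1 + g2)
  have hsmul : ∀ (c : ℝ) (g : StrongDual ℝ Z), lim (c • g) = c * lim g := by
    intro c g
    refine tendsto_nhds_unique ?_ ((hlimspec g).const_mul c)
    have heq : (fun n => (c • g) (z (φ n))) = fun n => c * g (z (φ n)) := by
      funext n; simp [smul_eq_mul]
    rw [← heq]
    exact hlimspec (c • g)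
  set L : StrongDual ℝ Z →ₗ[ℝ] ℝ :=
    { toFun := lim, map_add' := hadd, map_smul' := fun c g => by simpa using hsmul c g }
  have hbound : ∀ g : StrongDual ℝ Z, ‖L g‖ ≤ C * ‖g‖ := by
    intro g
    refine le_of_tendsto (hlimspec g).norm (Filter.Eventually.of_forall fun n => ?_)
    calc ‖g (z (φ n))‖ ≤ ‖g‖ * ‖z (φ n)‖ := g.le_opNorm _
      _ ≤ ‖g‖ * C := mul_le_mul_of_nonneg_left (hC _) (norm_nonneg _)
      _ = C * ‖g‖ := mul_comm _ _
  obtain ⟨w, hw⟩ := hrefl (LinearMap.mkContinuous L C hbound)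
  refine ⟨φ, hφ, w, fun g => ?_⟩
  have hgw : g w = lim g := by
    have h1 : inclusionInDoubleDual ℝ Z w g = g w := NormedSpace.dual_def ℝ Z w g
    rw [← h1, hw]
    rfl
  rw [hgw]
  exact hlimspec g

/-- Weak sequential compactness of bounded sequences in a reflexive space. -/
lemma weak_seq_compact
    (hrefl : Function.Surjective (inclusionInDoubleDual ℝ E))
    (x : ℕ → E) (C : ℝ) (hC : ∀ n, ‖x n‖ ≤ C) :
    ∃ φ : ℕ → ℕ, StrictMono φ ∧ ∃ y : E,
      ∀ f : StrongDual ℝ E, Tendsto (fun n => f (x (φ n))) atTop (𝓝 (f y)) := by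
  set S := (Submodule.span ℝ (Set.range x)).topologicalClosure with hSdef
  have hScl : IsClosed (S : Set E) := Submodule.isClosed_topologicalClosure _
  have hxS : ∀ n, x n ∈ S := fun n =>
    Submodule.le_topologicalClosure _ (Submodule.subset_span ⟨n, rfl⟩)
  set x' : ℕ → S := fun n => ⟨x n, hxS n⟩ with hx'def
  haveI hsepS : SeparableSpace S := by
    apply TopologicalSpace.IsSeparable.separableSpace
    have h1 : TopologicalSpace.IsSeparable
        ((Submodule.span ℝ (Set.range x) : Submodule ℝ E) : Set E) :=
      (Set.countable_range x).isSeparable.span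
    have h2 := h1.closure
    rwa [← Submodule.topologicalClosure_coe] at h2
  have hreflS := surjective_doubleDual_subspace hrefl S hScl
  haveI : SeparableSpace (StrongDual ℝ (StrongDual ℝ S)) :=
    hreflS.denseRange.separableSpace (inclusionInDoubleDual ℝ S).continuous
  have hsepdual : SeparableSpace (StrongDual ℝ S) :=
    separableSpace_of_dual_separable (E := StrongDual ℝ S) inferInstance
  have hC' : ∀ n, ‖x' n‖ ≤ C := fun n => hC n
  obtain ⟨φ, hφ, w, hw⟩ := weak_seq_compact_of_separable_dual hsepdual hreflS x' C hC'
  exact ⟨φ, hφ, (w : E), fun f => hw (dualRestrict S f)⟩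

end WeakCompactness

/-! ### Auxiliary results: minimality and uniqueness on `M` -/

section MLemmas

variable {X : Type*} [NormedAddCommGroup X] [NormedSpace ℝ X]

/-- Points of `M` minimize `I` on their affine fiber. -/
lemma M_min {P : X →L[ℝ] X} {I : X → ℝ} (h5 : CondI5 P I) {u : X} (hu : u ∈ Mset P I)
    {w : X} (hw : P w = P u) : I u ≤ I w := by
  rcases eq_or_ne w u with rfl | hne
  · exact le_rfl
  · have h := h5 u hu (w - u) (by rw [map_sub, hw, sub_self]) (sub_ne_zero.2 hne)
    have heq : u + (w - u) = w := by abel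
    rw [heq] at h
    exact h.le

/-- Two points of `M` with the same projection coincide. -/
lemma M_uniq {P : X →L[ℝ] X} {I : X → ℝ} (h5 : CondI5 P I) {u v : X} (hu : u ∈ Mset P I)
    (hv : v ∈ Mset P I) (hP : P u = P v) : u = v := by
  by_contra hne
  have h1 := h5 u hu (v - u) (by rw [map_sub, hP, sub_self]) (sub_ne_zero.2 (Ne.symm hne))
  have h2 := h5 v hv (u - v) (by rw [map_sub, hP, sub_self]) (sub_ne_zero.2 hne)
  rw [show u + (v - u) = v by abel] at h1
  rw [show v + (u - v) = u by abel] at h2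
  linarith

end MLemmas

/-! ### Sequential continuity of `m` -/

lemma m_seq_continuous {X : Type*} [NormedAddCommGroup X] [NormedSpace ℝ X] [CompleteSpace X]
    (P : X →L[ℝ] X) (I : X → ℝ) (hX : SpaceHyp P)
    (h1 : CondI1 I) (h2 : CondI2 P I) (h3 : CondI3 P I) (h4 : CondI4 P I) (h5 : CondI5 P I)
    (m : X → X) (hm : ∀ up : X, P up = up → m up ∈ Mset P I ∧ P (m up) = up)
    (up : ℕ → X) (l : X) (hup : ∀ n, P (up n) = up n) (hl : P l = l)
    (htend : Tendsto up atTop (𝓝 l)) :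
    Tendsto (fun n => m (up n)) atTop (𝓝 (m l)) := by
  have hIcont : Continuous I := h1.1.continuous
  obtain ⟨huM, hPul⟩ := hm l hl
  set u := m l with hudef
  have hwP : ∀ n, P (up n + (u - l)) = up n := by
    intro n; rw [map_add, map_sub, hPul, hup n, hl, sub_self, add_zero]
  have hcomp : ∀ n, I (m (up n)) ≤ I (up n + (u - l)) := fun n =>
    M_min h5 (hm (up n) (hup n)).1 (by rw [hwP n, (hm (up n) (hup n)).2])
  have hct : Tendsto (fun n => I (up n + (u - l))) atTop (𝓝 (I u)) := by
    have h' : Tendsto (fun n => up n + (u - l)) atTop (𝓝 (l + (u - l))) :=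
      htend.add tendsto_const_nhds
    rw [show l + (u - l) = u by abel] at h'
    exact (hIcont.tendsto u).comp h'
  obtain ⟨B, hB⟩ : ∃ B, ∀ n, I (up n + (u - l)) ≤ B := by
    obtain ⟨B, hB⟩ := hct.bddAbove_range
    exact ⟨B, fun n => hB (Set.mem_range_self n)⟩
  obtain ⟨B1, hB1⟩ : ∃ B1, ∀ n, ‖up n‖ ≤ B1 := by
    obtain ⟨B1, hB1⟩ := htend.norm.bddAbove_range
    exact ⟨B1, fun n => hB1 (Set.mem_range_self n)⟩
  have hIB : ∀ n, I (m (up n)) ≤ B := fun n => (hcomp n).trans (hB n)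
  obtain ⟨C, hCb⟩ : ∃ C, ∀ n, ‖m (up n)‖ ≤ C := by
    by_contra hcon
    push_neg at hcon
    choose g hg using hcon
    have hs : Tendsto (fun k : ℕ => ‖m (up (g (k : ℝ)))‖) atTop atTop :=
      tendsto_atTop_mono (fun k => (hg (k : ℝ)).le) tendsto_natCast_atTop_atTop
    have h4' := h4 (fun k : ℕ => m (up (g (k : ℝ)))) hs
    have hb : ∀ k : ℕ, ‖P (m (up (g (k : ℝ))))‖ + I (m (up (g (k : ℝ)))) ≤ B1 + B := by
      intro k
      rw [(hm _ (hup _)).2]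
      exact add_le_add (hB1 _) (hIB _)
    obtain ⟨k, hk⟩ := (h4'.eventually_gt_atTop (B1 + B)).exists
    exact absurd (hb k) (not_le.mpr hk)
  apply tendsto_of_subseq_tendsto
  intro ns hns
  set v : ℕ → X := fun n => m (up (ns n)) - up (ns n) with hvdef
  have hv0 : ∀ n, P (v n) = 0 := by
    intro n
    simp only [hvdef, map_sub, (hm _ (hup _)).2, hup, sub_self]
  have hvC : ∀ n, ‖v n‖ ≤ C + B1 := by
    intro n
    calc ‖v n‖ ≤ ‖m (up (ns n))‖ + ‖up (ns n)‖ := norm_sub_le _ _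
      _ ≤ C + B1 := add_le_add (hCb _) (hB1 _)
  obtain ⟨φ, hφ, y, hy⟩ := weak_seq_compact hX.reflexive v (C + B1) hvC
  have hPy : P y = 0 := by
    have h0 : ∀ ψ : StrongDual ℝ X, ψ (P y) = 0 := by
      intro ψ
      have hψ := hy (ψ.comp P)
      have heq : (fun n => (ψ.comp P) (v (φ n))) = fun _ => (0 : ℝ) := by
        funext n
        simp [ContinuousLinearMap.comp_apply, hv0 (φ n)]
      rw [heq] at hψ
      exact (tendsto_nhds_unique hψ tendsto_const_nhds)
    exact NormedSpace.eq_zero_of_forall_dual_eq_zero ℝ h0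
  set l' := l + y with hl'def
  have hPl' : P l' = l := by rw [hl'def, map_add, hPy, add_zero, hl]
  set w : ℕ → X := fun n => m (up (ns (φ n))) with hwdef
  have hnsφ : Tendsto (ns ∘ φ) atTop atTop := hns.comp hφ.tendsto_atTop
  have hTC : TConv P w l' := by
    constructor
    · have h' : Tendsto (fun n => up (ns (φ n))) atTop (𝓝 l) := htend.comp hnsφ
      have heq : (fun n => P (w n)) = fun n => up (ns (φ n)) := by
        funext n; exact (hm _ (hup _)).2
      rw [heq, hPl']
      exact h'
    · intro f
      have h' := hy f
      have heq : (fun n => f (w n - P (w n))) = fun n => f (v (φ n)) := by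
        funext n
        congr 1
        rw [(hm _ (hup _)).2]
      have heq2 : l' - P l' = y := by rw [hPl', hl'def]; abel
      rw [heq, heq2]
      exact h'
  have hc2 : Tendsto (fun n => I (up (ns (φ n)) + (u - l))) atTop (𝓝 (I u)) :=
    hct.comp hnsφ
  have hub : ∀ n, I (w n) ≤ I (up (ns (φ n)) + (u - l)) := fun n => hcomp _
  have hbddAbove : IsBoundedUnder (· ≤ ·) atTop (fun n => I (w n)) :=
    isBoundedUnder_of ⟨B, fun n => hIB _⟩
  have hbddBelow : IsBoundedUnder (· ≥ ·) atTop (fun n => I (w n)) :=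
    isBoundedUnder_of ⟨0, fun n => h1.2.2 _⟩
  have hlimsup : limsup (fun n => I (w n)) atTop ≤ I u := by
    calc limsup (fun n => I (w n)) atTop
        ≤ limsup (fun n => I (up (ns (φ n)) + (u - l))) atTop :=
          limsup_le_limsup (Filter.Eventually.of_forall hub)
            hbddBelow.isCoboundedUnder_le hc2.isBoundedUnder_le
      _ = I u := hc2.limsup_eq
  have hliminf : I l' ≤ liminf (fun n => I (w n)) atTop := h2 w l' hTC
  have hIul' : I u ≤ I l' := M_min h5 huM (by rw [hPl', hPul])
  have hlls : liminf (fun n => I (w n)) atTop ≤ limsup (fun n => I (w n)) atTop :=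
    liminf_le_limsup hbddAbove hbddBelow
  have hIeq : I l' = I u := le_antisymm (by linarith) hIul'
  have hl'u : l' = u := by
    by_contra hne
    have hstrict := h5 u huM (l' - u) (by rw [map_sub, hPl', hPul, sub_self])
      (sub_ne_zero.2 hne)
    rw [show u + (l' - u) = l' by abel] at hstrict
    linarith
  have htendI : Tendsto (fun n => I (w n)) atTop (𝓝 (I l')) :=
    tendsto_of_le_liminf_of_limsup_le hliminf (by rw [hIeq]; exact hlimsup)
      hbddAbove hbddBelow
  have hfin := h3 w l' hTC htendI
  rw [hl'u] at hfin
  exact ⟨φ, hfin⟩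


/-- (cf. Proposition 4.1 b)).
Under (I1)–(I5), the map `m : X⁺ → M` sending `u⁺` to the unique point of `M` in `u⁺ + X̃`
is a homeomorphism (both `m` and its inverse `u ↦ u⁺` being continuous for the norm
topologies), with inverse `M ∋ u ↦ u⁺ = P u`. -/
theorem statement1 (P : X →L[ℝ] X) (I : X → ℝ) (hX : SpaceHyp P)
    (h1 : CondI1 I) (h2 : CondI2 P I) (h3 : CondI3 P I) (h4 : CondI4 P I) (h5 : CondI5 P I)
    (m : X → X) (hm : ∀ up : X, P up = up → m up ∈ Mset P I ∧ P (m up) = up) :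
    Set.BijOn m {u : X | P u = u} (Mset P I) ∧
    ContinuousOn m {u : X | P u = u} ∧
    ContinuousOn (fun u : X => P u) (Mset P I) ∧
    (∀ u ∈ Mset P I, m (P u) = u) := by
  -- inverse identity
  have hminv : ∀ u ∈ Mset P I, m (P u) = u := by
    intro u huM
    obtain ⟨hmM, hmP⟩ := hm (P u) (hX.idem u)
    exact M_uniq h5 hmM huM (by rw [hmP])
  refine ⟨⟨fun a ha => (hm a ha).1, fun a ha b hb hab => ?_, fun z hz => ?_⟩, ?_,
    P.continuous.continuousOn, hminv⟩
  · calc a = P (m a) := ((hm a ha).2).symm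
      _ = P (m b) := by rw [hab]
      _ = b := (hm b hb).2
  · exact ⟨P z, hX.idem z, hminv z hz⟩
  · intro x hx
    have hxP : P x = x := hx
    have : Tendsto m (𝓝[{u : X | P u = u}] x) (𝓝 (m x)) := by
      rw [tendsto_iff_seq_tendsto]
      intro seq hseq
      have hseqx : Tendsto seq atTop (𝓝 x) := hseq.mono_right nhdsWithin_le_nhds
      have hmem : ∀ᶠ n in atTop, P (seq n) = seq n :=
        hseq.eventually eventually_mem_nhdsWithin
      obtain ⟨N, hN⟩ := Filter.eventually_atTop.mp hmem
      have hkey := m_seq_continuous P I hX h1 h2 h3 h4 h5 m hm (fun n => seq (n + N)) x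
        (fun n => hN (n + N) (Nat.le_add_left N n)) hxP
        (hseqx.comp (tendsto_add_atTop_nat N))
      exact (Filter.tendsto_add_atTop_iff_nat (f := fun n => m (seq n)) N).mp hkey
    exact this

end
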